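/- Let n ≥ 2 and let ω be a real symmetric invertible n×n matrix and ω̄ a real symmetric n×n matrix. Suppose that every n×n real matrix A satisfying Aᵀω + ωA = 0 also satisfies Aᵀω̄ + ω̄A = 0. Then there exists a ∈ ℝ such that ω̄ = a·ω. -/

import Mathlib

open Matrix

lemma stdBasisMatrix_transpose' {n : ℕ} (i j : Fin n) (c : ℝ) :
    (single i j c)ᵀ = single j i c := by
  ext a b
  simp [single, and_comm]

/-- For `n ≥ 2`, if `ω` is a real symmetric invertible `n×n` matrix and
`ω̄` a real symmetric `n×n` matrix such that every `A` with `Aᵀω + ωA = 0` also satisfies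
`Aᵀω̄ + ω̄A = 0`, then `ω̄ = a·ω` for some real `a` (two metrics define the same Killing
system iff they are proportional). -/
theorem stmt19 (n : ℕ) (hn : 2 ≤ n) (ω ωb : Matrix (Fin n) (Fin n) ℝ)
    (hω : ω.IsSymm) (hinv : IsUnit ω) (hωb : ωb.IsSymm)
    (h : ∀ A : Matrix (Fin n) (Fin n) ℝ, Aᵀ * ω + ω * A = 0 → Aᵀ * ωb + ωb * A = 0) :
    ∃ a : ℝ, ωb = a • ω := by
  have hd : IsUnit ω.det := (Matrix.isUnit_iff_isUnit_det ω).mp hinv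
  have hωι : ω * ω⁻¹ = 1 := Matrix.mul_nonsing_inv ω hd
  have hιω : ω⁻¹ * ω = 1 := Matrix.nonsing_inv_mul ω hd
  have hιs : ω⁻¹ᵀ = ω⁻¹ := by
    rw [Matrix.transpose_nonsing_inv, hω.eq]
  set N : Matrix (Fin n) (Fin n) ℝ := ω⁻¹ * ωb with hN
  have hNt : Nᵀ = ωb * ω⁻¹ := by
    rw [hN, Matrix.transpose_mul, hιs, hωb.eq]
  -- key commutation relation
  have key : ∀ i j : Fin n, i ≠ j →
      Nᵀ * (single i j (1:ℝ) - single j i 1)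
        = (single i j (1:ℝ) - single j i 1) * N := by
    intro i j hij
    set S := single i j (1:ℝ) - single j i 1 with hS
    have hSt : Sᵀ = -S := by
      rw [hS, Matrix.transpose_sub, stdBasisMatrix_transpose', stdBasisMatrix_transpose']
      abel
    have hA : (ω⁻¹ * S)ᵀ * ω + ω * (ω⁻¹ * S) = 0 := by
      rw [Matrix.transpose_mul, hιs, hSt, Matrix.mul_assoc (-S), hιω,
        ← Matrix.mul_assoc ω ω⁻¹, hωι, Matrix.mul_one, Matrix.one_mul]
      simp
    have h1 := h (ω⁻¹ * S) hA
    rw [Matrix.transpose_mul, hιs, hSt] at h1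
    -- h1 : -S * ω⁻¹ * ωb + ωb * (ω⁻¹ * S) = 0
    have h4 : ωb * (ω⁻¹ * S) = S * ω⁻¹ * ωb := by
      rw [Matrix.neg_mul, Matrix.neg_mul] at h1
      exact (neg_add_eq_zero.mp h1).symm
    rw [hNt, hN, Matrix.mul_assoc ωb, h4, Matrix.mul_assoc]
  -- off-diagonal entries of N vanish
  have hoff : ∀ i j : Fin n, i ≠ j → N i j = 0 := by
    intro i j hij
    have hkey := congrFun (congrFun (key i j hij) j) j
    simp only [Matrix.mul_sub, Matrix.sub_mul, Matrix.sub_apply] at hkey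
    simp [hij, Ne.symm hij, Matrix.transpose_apply] at hkey
    linarith
  -- diagonal entries of N are all equal
  have hdiag : ∀ i j : Fin n, i ≠ j → N i i = N j j := by
    intro i j hij
    have hkey := congrFun (congrFun (key i j hij) i) j
    simp only [Matrix.mul_sub, Matrix.sub_mul, Matrix.sub_apply] at hkey
    simp [hij, Ne.symm hij, Matrix.transpose_apply] at hkey
    linarith
  have h0 : (0 : ℕ) < n := by omega
  set z : Fin n := ⟨0, h0⟩ with hz
  obtain ⟨a, hNeq⟩ : ∃ a : ℝ, N = a • (1 : Matrix (Fin n) (Fin n) ℝ) := by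
    refine ⟨N z z, ?_⟩
    ext k l
    by_cases hkl : k = l
    · subst hkl
      by_cases hk : k = z
      · subst hk; simp
      · simp only [Matrix.smul_apply, Matrix.one_apply_eq, smul_eq_mul, mul_one]
        exact hdiag k z hk
    · simp only [Matrix.smul_apply, Matrix.one_apply_ne hkl, smul_eq_mul, mul_zero]
      exact hoff k l hkl
  refine ⟨a, ?_⟩
  calc ωb = ω * (ω⁻¹ * ωb) := by rw [← Matrix.mul_assoc, hωι, Matrix.one_mul]
    _ = ω * (a • 1) := by rw [← hN, hNeq]
    _ = a • ω := by rw [Matrix.mul_smul, Matrix.mul_one]
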